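/- Let G be an abelian group and let R, R', S, S' be quasi-endomorphisms of G with R ≡ R' and S ≡ S'. Then R + S ≡ R' + S' and S ∘ R ≡ S' ∘ R'. -/

import Mathlib

namespace QH

variable {G H K : Type*} [AddCommGroup G] [AddCommGroup H] [AddCommGroup K]

def dom (R : AddSubgroup (G × H)) : AddSubgroup G := R.map (AddMonoidHom.fst G H)

def img (R : AddSubgroup (G × H)) : AddSubgroup H := R.map (AddMonoidHom.snd G H)

def ker (R : AddSubgroup (G × H)) : AddSubgroup G := R.comap (AddMonoidHom.inl G H)

def coker (R : AddSubgroup (G × H)) : AddSubgroup H := R.comap (AddMonoidHom.inr G H)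

/-- The sum of two additive relations: `R + R' = {(a, b+b') : (a,b) ∈ R, (a,b') ∈ R'}`. -/
def relAdd (R R' : AddSubgroup (G × H)) : AddSubgroup (G × H) where
  carrier := {p | ∃ b b', (p.1, b) ∈ R ∧ (p.1, b') ∈ R' ∧ p.2 = b + b'}
  zero_mem' := ⟨0, 0, R.zero_mem, R'.zero_mem, by simp⟩
  add_mem' := by
    rintro ⟨a, c⟩ ⟨a', c'⟩ ⟨b, b', hb, hb', rfl⟩ ⟨d, d', hd, hd', rfl⟩
    exact ⟨b + d, b' + d', R.add_mem hb hd, R'.add_mem hb' hd', by simp only [Prod.snd_add]; abel⟩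
  neg_mem' := by
    rintro ⟨a, c⟩ ⟨b, b', hb, hb', rfl⟩
    exact ⟨-b, -b', R.neg_mem hb, R'.neg_mem hb', by simp only [Prod.snd_neg]; abel⟩

/-- The composition of additive relations. -/
def relComp (S : AddSubgroup (H × K)) (R : AddSubgroup (G × H)) : AddSubgroup (G × K) where
  carrier := {p | ∃ b, (p.1, b) ∈ R ∧ (b, p.2) ∈ S}
  zero_mem' := ⟨0, R.zero_mem, S.zero_mem⟩
  add_mem' := by
    rintro ⟨a, c⟩ ⟨a', c'⟩ ⟨b, hb, hb'⟩ ⟨d, hd, hd'⟩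
    exact ⟨b + d, R.add_mem hb hd, S.add_mem hb' hd'⟩
  neg_mem' := by
    rintro ⟨a, c⟩ ⟨b, hb, hb'⟩
    exact ⟨-b, R.neg_mem hb, S.neg_mem hb'⟩

/-- The inverse of an additive relation: `R⁻¹ = {(h,g) : (g,h) ∈ R}`. -/
def relInv (R : AddSubgroup (G × H)) : AddSubgroup (H × G) :=
  R.map ((AddMonoidHom.snd G H).prod (AddMonoidHom.fst G H))

/-- The diagonal relation `id_D = {(d,d) : d ∈ D}` of a subgroup `D ≤ A`. -/
def relId {A : Type*} [AddCommGroup A] (D : AddSubgroup A) : AddSubgroup (A × A) :=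
  D.map ((AddMonoidHom.id A).prod (AddMonoidHom.id A))


def IsQuasiHom (R : AddSubgroup (G × H)) : Prop :=
  (dom R).FiniteIndex ∧ ((coker R : Set H)).Finite

/-- Two additive relations `R, R' ≤ G × H` are equivalent if there are a finite-index
subgroup `G₁ ≤ G` and a finite subgroup `F ≤ H` with
`(R ∩ (G₁ × H)) + (G₁ × F) = (R' ∩ (G₁ × H)) + (G₁ × F)`. -/
def relEquiv (R R' : AddSubgroup (G × H)) : Prop :=
  ∃ (G₁ : AddSubgroup G) (F : AddSubgroup H), G₁.FiniteIndex ∧ ((F : Set H)).Finite ∧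
    relAdd (R ⊓ G₁.prod ⊤) (G₁.prod F) = relAdd (R' ⊓ G₁.prod ⊤) (G₁.prod F)

lemma mem_dom {R : AddSubgroup (G × H)} {a : G} : a ∈ dom R ↔ ∃ b, (a, b) ∈ R := by
  constructor
  · rintro ⟨⟨x, y⟩, hxy, rfl⟩; exact ⟨y, hxy⟩
  · rintro ⟨b, hb⟩; exact ⟨(a, b), hb, rfl⟩

lemma mem_img {R : AddSubgroup (G × H)} {b : H} : b ∈ img R ↔ ∃ a, (a, b) ∈ R := by
  constructor
  · rintro ⟨⟨x, y⟩, hxy, rfl⟩; exact ⟨x, hxy⟩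
  · rintro ⟨a, ha⟩; exact ⟨(a, b), ha, rfl⟩

lemma mem_coker {R : AddSubgroup (G × H)} {b : H} : b ∈ coker R ↔ (0, b) ∈ R := Iff.rfl

lemma sub_pair {S : AddSubgroup (G × H)} {a a' : G} {b b' : H}
    (h : (a, b) ∈ S) (h' : (a', b') ∈ S) : (a - a', b - b') ∈ S := S.sub_mem h h'

lemma fiber_finite {S : AddSubgroup (G × H)} (hS : ((coker S : Set H)).Finite) (e : G) :
    {c : H | (e, c) ∈ S}.Finite := by
  rcases Set.eq_empty_or_nonempty {c : H | (e, c) ∈ S} with h | ⟨c₀, hc₀⟩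
  · simp [h]
  · apply Set.Finite.subset (hS.image (c₀ + ·))
    intro c hc
    refine ⟨c - c₀, ?_, by simp⟩
    have : ((0 : G), c - c₀) ∈ S := by
      have := sub_pair hc hc₀; simpa using this
    exact this

lemma img_finite {S : AddSubgroup (G × H)} (hS : ((coker S : Set H)).Finite)
    {E : AddSubgroup G} (hE : (E : Set G).Finite) :
    ((img (S ⊓ E.prod ⊤) : Set H)).Finite := by
  apply Set.Finite.subset (hE.biUnion fun e _ => fiber_finite hS e)
  intro c hc
  rcases mem_img.1 hc with ⟨e, heS, heE, -⟩
  exact Set.mem_biUnion heE heS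

lemma sup_finite {F F' : AddSubgroup H} (h : (F : Set H).Finite) (h' : (F' : Set H).Finite) :
    ((F ⊔ F' : AddSubgroup H) : Set H).Finite := by
  apply Set.Finite.subset (Set.Finite.image2 (· + ·) h h')
  intro x hx
  rcases (AddSubgroup.mem_sup).1 hx with ⟨y, hy, z, hz, rfl⟩
  exact Set.mem_image2_of_mem hy hz

lemma finiteIndex_dom_inf {R : AddSubgroup (G × H)} (hR : (dom R).FiniteIndex)
    {D : AddSubgroup H} (hD : D.FiniteIndex) :
    (dom (R ⊓ ((⊤ : AddSubgroup G).prod D))).FiniteIndex := by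
  set A := dom (R ⊓ ((⊤ : AddSubgroup G).prod D)) with hA
  have hdom : ∀ a : G, a - ((a : G ⧸ dom R)).out ∈ dom R := by
    intro a
    rw [← QuotientAddGroup.eq_iff_sub_mem]
    exact (QuotientAddGroup.out_eq' _).symm
  choose b hb using fun a => mem_dom.1 (hdom a)
  set f : G → (G ⧸ dom R) × (H ⧸ D) := fun a => ((a : G ⧸ dom R), (b a : H ⧸ D)) with hf
  have key : ∀ a a', f a = f a' → a - a' ∈ A := by
    intro a a' hfa
    have h1 : (a : G ⧸ dom R) = (a' : G ⧸ dom R) := congrArg Prod.fst hfa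
    have h2 : (b a : H ⧸ D) = (b a' : H ⧸ D) := congrArg Prod.snd hfa
    have hbd : b a - b a' ∈ D := QuotientAddGroup.eq_iff_sub_mem.1 h2
    have hRab : (a - a' , b a - b a') ∈ R := by
      have e1 := hb a
      have e2 := hb a'
      rw [h1] at e1
      have := sub_pair e1 e2
      simpa using this
    exact mem_dom.2 ⟨b a - b a', hRab, trivial, hbd⟩
  haveI : Finite (G ⧸ dom R) := by haveI := hR; exact AddSubgroup.finite_quotient_of_finiteIndex
  haveI : Finite (H ⧸ D) := by haveI := hD; exact AddSubgroup.finite_quotient_of_finiteIndex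
  haveI : Finite (G ⧸ A) := by
    apply Finite.of_injective (fun x : G ⧸ A => f x.out)
    intro x y hxy
    have := key _ _ hxy
    rw [← QuotientAddGroup.eq_iff_sub_mem] at this
    rwa [QuotientAddGroup.out_eq', QuotientAddGroup.out_eq'] at this
  exact AddSubgroup.finiteIndex_of_finite_quotient

lemma mem_restrict {C : AddSubgroup (G × H)} {G₁ : AddSubgroup G} {F : AddSubgroup H}
    {a : G} {x : H} :
    (a, x) ∈ relAdd (C ⊓ G₁.prod ⊤) (G₁.prod F) ↔ a ∈ G₁ ∧ ∃ b, (a, b) ∈ C ∧ x - b ∈ F := by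
  constructor
  · rintro ⟨b, b', ⟨hbC, hbG, -⟩, ⟨hG, hF⟩, rfl⟩
    exact ⟨hG, b, hbC, by simpa using hF⟩
  · rintro ⟨hG, b, hbC, hF⟩
    exact ⟨b, x - b, ⟨hbC, hG, trivial⟩, ⟨hG, hF⟩, by abel⟩

lemma restrict_eq_iff {C C' : AddSubgroup (G × H)} {G₁ : AddSubgroup G} {F : AddSubgroup H} :
    relAdd (C ⊓ G₁.prod ⊤) (G₁.prod F) = relAdd (C' ⊓ G₁.prod ⊤) (G₁.prod F) ↔
      ((∀ a ∈ G₁, ∀ c, (a, c) ∈ C → ∃ c', (a, c') ∈ C' ∧ c - c' ∈ F) ∧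
       (∀ a ∈ G₁, ∀ c, (a, c) ∈ C' → ∃ c', (a, c') ∈ C ∧ c - c' ∈ F)) := by
  constructor
  · intro h
    constructor
    · intro a ha c hc
      have hm : (a, c) ∈ relAdd (C ⊓ G₁.prod ⊤) (G₁.prod F) :=
        mem_restrict.2 ⟨ha, c, hc, by simpa using F.zero_mem⟩
      rw [h] at hm
      rcases mem_restrict.1 hm with ⟨-, b, hb, hFb⟩
      exact ⟨b, hb, hFb⟩
    · intro a ha c hc
      have hm : (a, c) ∈ relAdd (C' ⊓ G₁.prod ⊤) (G₁.prod F) :=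
        mem_restrict.2 ⟨ha, c, hc, by simpa using F.zero_mem⟩
      rw [← h] at hm
      rcases mem_restrict.1 hm with ⟨-, b, hb, hFb⟩
      exact ⟨b, hb, hFb⟩
  · rintro ⟨hcc', hc'c⟩
    ext ⟨a, x⟩
    rw [mem_restrict, mem_restrict]
    constructor
    · rintro ⟨ha, b, hb, hFb⟩
      rcases hcc' a ha b hb with ⟨b', hb', hF'⟩
      refine ⟨ha, b', hb', ?_⟩
      have hx : x - b' = (x - b) + (b - b') := by abel
      rw [hx]; exact F.add_mem hFb hF'
    · rintro ⟨ha, b, hb, hFb⟩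
      rcases hc'c a ha b hb with ⟨b', hb', hF'⟩
      refine ⟨ha, b', hb', ?_⟩
      have hx : x - b' = (x - b) + (b - b') := by abel
      rw [hx]; exact F.add_mem hFb hF'

lemma comp_key {R R' S S' : AddSubgroup (G × G)} {G₁ G₂ F₁ F₂ : AddSubgroup G}
    (h1 : ∀ a ∈ G₁, ∀ b, (a, b) ∈ R → ∃ b', (a, b') ∈ R' ∧ b - b' ∈ F₁)
    (h2 : ∀ a ∈ G₂, ∀ b, (a, b) ∈ S → ∃ b', (a, b') ∈ S' ∧ b - b' ∈ F₂)
    {D : AddSubgroup G} (hD2 : D ≤ G₂) (hDS : D ≤ dom S) (hDS' : D ≤ dom S')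
    {a c : G} (ha1 : a ∈ G₁)
    (haR : a ∈ dom (R ⊓ ((⊤ : AddSubgroup G).prod D)))
    (haR' : a ∈ dom (R' ⊓ ((⊤ : AddSubgroup G).prod D)))
    (hc : (a, c) ∈ relComp S R) :
    ∃ c', (a, c') ∈ relComp S' R' ∧
      c - c' ∈ img (S ⊓ (coker R).prod ⊤) ⊔ F₂ ⊔ img (S' ⊓ (F₁ ⊔ coker R').prod ⊤) := by
  obtain ⟨b, hbR, hbS⟩ := hc
  obtain ⟨b₀, hb₀⟩ := mem_dom.1 haR
  obtain ⟨hb₀R, -, hb₀D⟩ := hb₀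
  obtain ⟨b₀', hb₀'⟩ := mem_dom.1 haR'
  obtain ⟨hb₀'R, -, hb₀'D⟩ := hb₀'
  have hbb₀ : b - b₀ ∈ coker R := mem_coker.2 (by simpa using sub_pair hbR hb₀R)
  obtain ⟨c₀, hc₀⟩ := mem_dom.1 (hDS hb₀D)
  have hcc₀ : c - c₀ ∈ img (S ⊓ (coker R).prod ⊤) :=
    mem_img.2 ⟨b - b₀, sub_pair hbS hc₀, hbb₀, trivial⟩
  obtain ⟨c₀', hc₀'S', hc₀F₂⟩ := h2 b₀ (hD2 hb₀D) c₀ hc₀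
  obtain ⟨c₁', hc₁'⟩ := mem_dom.1 (hDS' hb₀'D)
  obtain ⟨b₁', hb₁'R', hb₁F₁⟩ := h1 a ha1 b₀ hb₀R
  have hcok' : b₁' - b₀' ∈ coker R' := mem_coker.2 (by simpa using sub_pair hb₁'R' hb₀'R)
  have hbb' : b₀ - b₀' ∈ F₁ ⊔ coker R' := by
    have he : b₀ - b₀' = (b₀ - b₁') + (b₁' - b₀') := by abel
    rw [he]
    exact add_mem (AddSubgroup.mem_sup_left hb₁F₁) (AddSubgroup.mem_sup_right hcok')
  have hP₂ : c₀' - c₁' ∈ img (S' ⊓ (F₁ ⊔ coker R').prod ⊤) :=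
    mem_img.2 ⟨b₀ - b₀', sub_pair hc₀'S' hc₁', hbb', trivial⟩
  refine ⟨c₁', ⟨b₀', hb₀'R, hc₁'⟩, ?_⟩
  have he : c - c₁' = (c - c₀) + (c₀ - c₀') + (c₀' - c₁') := by abel
  rw [he]
  exact add_mem (add_mem (AddSubgroup.mem_sup_left (AddSubgroup.mem_sup_left hcc₀))
    (AddSubgroup.mem_sup_left (AddSubgroup.mem_sup_right hc₀F₂)))
    (AddSubgroup.mem_sup_right hP₂)

/-- equivalence of quasi-endomorphisms is a congruence for sum and
composition. -/
theorem relEquiv_congr (G : Type*) [AddCommGroup G] (R R' S S' : AddSubgroup (G × G))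
    (hR : IsQuasiHom R) (hR' : IsQuasiHom R') (hS : IsQuasiHom S) (hS' : IsQuasiHom S')
    (h1 : relEquiv R R') (h2 : relEquiv S S') :
    relEquiv (relAdd R S) (relAdd R' S') ∧ relEquiv (relComp S R) (relComp S' R') := by
  obtain ⟨G₁, F₁, hG₁, hF₁, heq1⟩ := h1
  obtain ⟨G₂, F₂, hG₂, hF₂, heq2⟩ := h2
  obtain ⟨e1a, e1b⟩ := restrict_eq_iff.1 heq1
  obtain ⟨e2a, e2b⟩ := restrict_eq_iff.1 heq2
  constructor
  · refine ⟨G₁ ⊓ G₂, F₁ ⊔ F₂, ?_, sup_finite hF₁ hF₂, ?_⟩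
    · haveI := hG₁; haveI := hG₂; infer_instance
    · rw [restrict_eq_iff]
      constructor
      · rintro a ⟨ha1, ha2⟩ c ⟨b, b', hb, hb', rfl⟩
        obtain ⟨br, hbr, hfr⟩ := e1a a ha1 b hb
        obtain ⟨bs, hbs, hfs⟩ := e2a a ha2 b' hb'
        refine ⟨br + bs, ⟨br, bs, hbr, hbs, rfl⟩, ?_⟩
        have he : b + b' - (br + bs) = (b - br) + (b' - bs) := by abel
        rw [he]
        exact add_mem (AddSubgroup.mem_sup_left hfr) (AddSubgroup.mem_sup_right hfs)
      · rintro a ⟨ha1, ha2⟩ c ⟨b, b', hb, hb', rfl⟩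
        obtain ⟨br, hbr, hfr⟩ := e1b a ha1 b hb
        obtain ⟨bs, hbs, hfs⟩ := e2b a ha2 b' hb'
        refine ⟨br + bs, ⟨br, bs, hbr, hbs, rfl⟩, ?_⟩
        have he : b + b' - (br + bs) = (b - br) + (b' - bs) := by abel
        rw [he]
        exact add_mem (AddSubgroup.mem_sup_left hfr) (AddSubgroup.mem_sup_right hfs)
  · set D : AddSubgroup G := G₂ ⊓ dom S ⊓ dom S' with hDdef
    have hD2 : D ≤ G₂ := inf_le_left.trans inf_le_left
    have hDS : D ≤ dom S := inf_le_left.trans inf_le_right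
    have hDS' : D ≤ dom S' := inf_le_right
    have hDfi : D.FiniteIndex := by
      haveI := hG₂; haveI := hS.1; haveI := hS'.1; infer_instance
    have hA : (dom (R ⊓ ((⊤ : AddSubgroup G).prod D))).FiniteIndex :=
      finiteIndex_dom_inf hR.1 hDfi
    have hA' : (dom (R' ⊓ ((⊤ : AddSubgroup G).prod D))).FiniteIndex :=
      finiteIndex_dom_inf hR'.1 hDfi
    refine ⟨G₁ ⊓ (dom (R ⊓ ((⊤ : AddSubgroup G).prod D)) ⊓
        dom (R' ⊓ ((⊤ : AddSubgroup G).prod D))),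
      (img (S ⊓ (coker R).prod ⊤) ⊔ F₂ ⊔ img (S' ⊓ (F₁ ⊔ coker R').prod ⊤)) ⊔
      (img (S' ⊓ (coker R').prod ⊤) ⊔ F₂ ⊔ img (S ⊓ (F₁ ⊔ coker R).prod ⊤)), ?_, ?_, ?_⟩
    · haveI := hG₁; haveI := hA; haveI := hA'; infer_instance
    · exact sup_finite
        (sup_finite (sup_finite (img_finite hS.2 hR.2) hF₂)
          (img_finite hS'.2 (sup_finite hF₁ hR'.2)))
        (sup_finite (sup_finite (img_finite hS'.2 hR'.2) hF₂)
          (img_finite hS.2 (sup_finite hF₁ hR.2)))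
    · rw [restrict_eq_iff]
      constructor
      · rintro a ⟨ha1, haR, haR'⟩ c hc
        obtain ⟨c', hc', hmem⟩ := comp_key e1a e2a hD2 hDS hDS' ha1 haR haR' hc
        exact ⟨c', hc', AddSubgroup.mem_sup_left hmem⟩
      · rintro a ⟨ha1, haR, haR'⟩ c hc
        obtain ⟨c', hc', hmem⟩ := comp_key e1b e2b hD2 hDS' hDS ha1 haR' haR hc
        exact ⟨c', hc', AddSubgroup.mem_sup_right hmem⟩

end QH
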